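/- Let c ∈ (0,1) and s = √(1−c²). Then f(x) > f(−x) for all x ∈ (0, (1−c)²], where f(x) = (1/16)·( ((σ_3/64)x² + (c/4)x − s²)² − (1/16)(1 − σ_2 + 2σ_3)c²x² + (1/16)(2 − σ_1)x² − c(x − 8c) )² − (64 + u_1²u_2²u_3²x²)·( x/32 − c/8 − c³/8 + (σ_3/512)c x² )², with u_1 = √(2(2+√2)) − 1 − √2, u_2 = √(2+√2) − 1, u_3 = 1 + √2 − √(2+√2), σ_1 = (1−u_1²)+(1−u_2²)+(1−u_3²), σ_2 = (1−u_1²)(1−u_2²)+(1−u_1²)(1−u_3²)+(1−u_2²)(1−u_3²), σ_3 = (1−u_1²)(1−u_2²)(1−u_3²). -/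
import Mathlib


open Real

noncomputable def u1 : ℝ := Real.sqrt (2 * (2 + Real.sqrt 2)) - 1 - Real.sqrt 2

noncomputable def u2 : ℝ := Real.sqrt (2 + Real.sqrt 2) - 1

noncomputable def u3 : ℝ := 1 + Real.sqrt 2 - Real.sqrt (2 + Real.sqrt 2)

noncomputable def σ1 : ℝ := (1 - u1 ^ 2) + (1 - u2 ^ 2) + (1 - u3 ^ 2)

noncomputable def σ2 : ℝ :=
  (1 - u1 ^ 2) * (1 - u2 ^ 2) + (1 - u1 ^ 2) * (1 - u3 ^ 2) + (1 - u2 ^ 2) * (1 - u3 ^ 2)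

noncomputable def σ3 : ℝ := (1 - u1 ^ 2) * (1 - u2 ^ 2) * (1 - u3 ^ 2)

/-- The resolvent function `f` of the quartic G⁰ interpolation problem
(equation (6) of the paper). -/
noncomputable def quarticF (c s x : ℝ) : ℝ :=
  (1 / 16) * (((σ3 / 64) * x ^ 2 + (c / 4) * x - s ^ 2) ^ 2
      - (1 / 16) * (1 - σ2 + 2 * σ3) * c ^ 2 * x ^ 2
      + (1 / 16) * (2 - σ1) * x ^ 2 - c * (x - 8 * c)) ^ 2
    - (64 + u1 ^ 2 * u2 ^ 2 * u3 ^ 2 * x ^ 2)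
      * (x / 32 - c / 8 - c ^ 3 / 8 + (σ3 / 512) * c * x ^ 2) ^ 2

lemma sqrt2_bounds : (1.41421 : ℝ) < Real.sqrt 2 ∧ Real.sqrt 2 < 1.41422 := by
  constructor
  · have : (1.41421 : ℝ) ^ 2 < 2 := by norm_num
    nlinarith [Real.sq_sqrt (by norm_num : (0:ℝ) ≤ 2), Real.sqrt_nonneg 2]
  · nlinarith [Real.sq_sqrt (by norm_num : (0:ℝ) ≤ 2), Real.sqrt_nonneg 2]

lemma sqrtt_bounds : (1.84775 : ℝ) < Real.sqrt (2 + Real.sqrt 2) ∧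
    Real.sqrt (2 + Real.sqrt 2) < 1.84777 := by
  obtain ⟨h1, h2⟩ := sqrt2_bounds
  have hnn : (0:ℝ) ≤ 2 + Real.sqrt 2 := by positivity
  constructor
  · nlinarith [Real.sq_sqrt hnn, Real.sqrt_nonneg (2 + Real.sqrt 2)]
  · nlinarith [Real.sq_sqrt hnn, Real.sqrt_nonneg (2 + Real.sqrt 2)]

lemma sqrtw_bounds : (2.61311 : ℝ) < Real.sqrt (2 * (2 + Real.sqrt 2)) ∧
    Real.sqrt (2 * (2 + Real.sqrt 2)) < 2.61314 := by
  obtain ⟨h1, h2⟩ := sqrt2_bounds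
  have hnn : (0:ℝ) ≤ 2 * (2 + Real.sqrt 2) := by positivity
  constructor
  · nlinarith [Real.sq_sqrt hnn, Real.sqrt_nonneg (2 * (2 + Real.sqrt 2))]
  · nlinarith [Real.sq_sqrt hnn, Real.sqrt_nonneg (2 * (2 + Real.sqrt 2))]

lemma u1_bounds : (0.1988 : ℝ) ≤ u1 ∧ u1 ≤ 0.199 := by
  obtain ⟨h1, h2⟩ := sqrt2_bounds
  obtain ⟨h3, h4⟩ := sqrtw_bounds
  unfold u1; constructor <;> nlinarith

lemma u2_bounds : (0.8477 : ℝ) ≤ u2 ∧ u2 ≤ 0.8478 := by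
  obtain ⟨h1, h2⟩ := sqrtt_bounds
  unfold u2; constructor <;> nlinarith

lemma u3_bounds : (0.5664 : ℝ) ≤ u3 ∧ u3 ≤ 0.5665 := by
  obtain ⟨h1, h2⟩ := sqrt2_bounds
  obtain ⟨h3, h4⟩ := sqrtt_bounds
  unfold u3; constructor <;> nlinarith

lemma prod_bounds {a b la ua lb ub : ℝ} (h1 : la ≤ a) (h2 : a ≤ ua) (h3 : lb ≤ b)
    (h4 : b ≤ ub) (hla : 0 ≤ la) (hlb : 0 ≤ lb) : la * lb ≤ a * b ∧ a * b ≤ ua * ub := by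
  constructor <;> nlinarith

set_option maxHeartbeats 1000000 in
lemma sigma_bounds :
    ((1.92 : ℝ) ≤ σ1 ∧ σ1 ≤ 1.93) ∧ ((1.11 : ℝ) ≤ σ2 ∧ σ2 ≤ 1.12) ∧
      ((0.183 : ℝ) ≤ σ3 ∧ σ3 ≤ 0.184) ∧
      ((0.009 : ℝ) ≤ u1 ^ 2 * u2 ^ 2 * u3 ^ 2 ∧ u1 ^ 2 * u2 ^ 2 * u3 ^ 2 ≤ 0.0092) := by
  obtain ⟨a1, a2⟩ := u1_bounds
  obtain ⟨b1, b2⟩ := u2_bounds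
  obtain ⟨c1, c2⟩ := u3_bounds
  have q1 : (0.03952 : ℝ) ≤ u1 ^ 2 ∧ u1 ^ 2 ≤ 0.039601 := by constructor <;> nlinarith
  have q2 : (0.718595 : ℝ) ≤ u2 ^ 2 ∧ u2 ^ 2 ≤ 0.718765 := by constructor <;> nlinarith
  have q3 : (0.320808 : ℝ) ≤ u3 ^ 2 ∧ u3 ^ 2 ≤ 0.320923 := by constructor <;> nlinarith
  obtain ⟨q1l, q1u⟩ := q1; obtain ⟨q2l, q2u⟩ := q2; obtain ⟨q3l, q3u⟩ := q3
  have w1 : (0.960399 : ℝ) ≤ 1 - u1 ^ 2 ∧ 1 - u1 ^ 2 ≤ 0.96048 := by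
    constructor <;> linarith
  have w2 : (0.281235 : ℝ) ≤ 1 - u2 ^ 2 ∧ 1 - u2 ^ 2 ≤ 0.281405 := by
    constructor <;> linarith
  have w3 : (0.679077 : ℝ) ≤ 1 - u3 ^ 2 ∧ 1 - u3 ^ 2 ≤ 0.679192 := by
    constructor <;> linarith
  have p12 := prod_bounds w1.1 w1.2 w2.1 w2.2 (by norm_num) (by norm_num)
  have p13 := prod_bounds w1.1 w1.2 w3.1 w3.2 (by norm_num) (by norm_num)
  have p23 := prod_bounds w2.1 w2.2 w3.1 w3.2 (by norm_num) (by norm_num)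
  have p123 := prod_bounds p12.1 p12.2 w3.1 w3.2 (by positivity) (by norm_num)
  have r12 := prod_bounds q1l q1u q2l q2u (by norm_num) (by norm_num)
  have r123 := prod_bounds r12.1 r12.2 q3l q3u (by positivity) (by norm_num)
  refine ⟨⟨?_, ?_⟩, ⟨?_, ?_⟩, ⟨?_, ?_⟩, ⟨?_, ?_⟩⟩
  · unfold σ1; linarith
  · unfold σ1; linarith
  · unfold σ2; linarith [p12.1, p13.1, p23.1]
  · unfold σ2; linarith [p12.2, p13.2, p23.2]
  · unfold σ3; linarith [p123.1]
  · unfold σ3; linarith [p123.2]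
  · linarith [r123.1]
  · linarith [r123.2]

set_option maxHeartbeats 4000000 in
/-- Part of Lemma 3 of the paper: for `c ∈ (0,1)` and `s = √(1−c²)`, the resolvent
function satisfies `f(x) > f(−x)` for all `x ∈ (0, (1−c)²]`. -/
theorem stmt_15 (c : ℝ) (hc : c ∈ Set.Ioo (0 : ℝ) 1) (s : ℝ)
    (hs : s = Real.sqrt (1 - c ^ 2)) :
    ∀ x ∈ Set.Ioc (0 : ℝ) ((1 - c) ^ 2), quarticF c s (-x) < quarticF c s x := by
  obtain ⟨hc0, hc1⟩ := hc
  intro x hx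
  obtain ⟨hx0, hxle⟩ := hx
  have hs2 : s ^ 2 = 1 - c ^ 2 := by
    rw [hs, Real.sq_sqrt]; nlinarith
  obtain ⟨⟨s1l, s1u⟩, ⟨s2l, s2u⟩, ⟨s3l, s3u⟩, ⟨Ul, Uu⟩⟩ := sigma_bounds
  set U : ℝ := u1 ^ 2 * u2 ^ 2 * u3 ^ 2 with hU
  set A2 : ℝ := -3/64 + U/64 - σ3/512 + 3*σ1/128
      + c^2*(1/64 + U/64 + 11*σ3/256 - 3*σ2/128 - σ1/128)
      + c^4*(-5*σ3/512 + σ2/128) with hA2def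
  set A4 : ℝ := σ3/4096 - σ3*U/4096 - 5*σ3^2/32768 - σ1*σ3/8192
      + c^2*(-5*σ3^2/32768 + σ2*σ3/8192) with hA4def
  have hc2 : c^2 ≤ 1 := by nlinarith
  have hc4 : c^4 ≤ 1 := by nlinarith
  have key : quarticF c s x - quarticF c s (-x)
      = x * c * ((5 - 9*c^2 + 3*c^4 + c^6)/8
        + x^2 * A2 + x^4 * A4 + x^6 * σ3^3 / 2097152) := by
    simp only [quarticF, hA2def, hA4def, hU, hs2]
    ring
  -- bounds on A2, A4
  have hs3nn : (0:ℝ) ≤ σ3 := by linarith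
  have hA2 : -1/50 ≤ A2 := by
    rw [hA2def]
    have hB : (-0.0178 : ℝ) ≤ 1/64 + U/64 + 11*σ3/256 - 3*σ2/128 - σ1/128 := by linarith
    have hD : (0:ℝ) ≤ -5*σ3/512 + σ2/128 := by linarith
    nlinarith [mul_nonneg (sq_nonneg c) (by linarith :
        (0:ℝ) ≤ 1/64 + U/64 + 11*σ3/256 - 3*σ2/128 - σ1/128 + 0.0178),
      mul_nonneg (pow_two_nonneg (c^2)) hD, sq_nonneg c, sq_nonneg (c^2)]
  have hA4 : -1/10000 ≤ A4 := by
    rw [hA4def]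
    have hE : (0:ℝ) ≤ -5*σ3^2/32768 + σ2*σ3/8192 := by
      nlinarith [mul_le_mul_of_nonneg_left s3u hs3nn, mul_le_mul_of_nonneg_right s2l hs3nn]
    nlinarith [mul_nonneg (sq_nonneg c) hE,
      mul_le_mul_of_nonneg_left Uu hs3nn,
      mul_le_mul_of_nonneg_left s3u hs3nn,
      mul_le_mul_of_nonneg_right s1u hs3nn]
  have hP : 0 < 1 - c^2 := by nlinarith
  have hxP : x ≤ (1 - c^2)^2 := by nlinarith
  have hx1 : x ≤ 1 := by nlinarith
  have hx2P : x^2 ≤ (1 - c^2)^2 := by nlinarith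
  have hx21 : x^2 ≤ 1 := by nlinarith
  have hx4P : x^4 ≤ (1 - c^2)^2 := by
    nlinarith [mul_nonneg (sq_nonneg x) (by linarith : (0:ℝ) ≤ 1 - x^2), hx2P]
  have h1 : 0 ≤ x^2 * (A2 + 1/50) := mul_nonneg (sq_nonneg x) (by linarith)
  have h2 : 0 ≤ x^4 * (A4 + 1/10000) :=
    mul_nonneg (by positivity) (by linarith)
  have h3 : 0 ≤ x^6 * σ3^3 := by positivity
  have h1' : -(1/50)*x^2 ≤ x^2 * A2 := by nlinarith [h1]
  have h2' : -(1/10000)*x^4 ≤ x^4 * A4 := by nlinarith [h2]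
  have hP0 : 5/8 * (1-c^2)^2 ≤ (5 - 9*c^2 + 3*c^4 + c^6)/8 := by
    nlinarith [sq_nonneg (c*(1-c^2))]
  have hq : 0 < (1 - c^2)^2 := pow_pos hP 2
  have hG : 0 < (5 - 9*c^2 + 3*c^4 + c^6)/8
      + x^2 * A2 + x^4 * A4 + x^6 * σ3^3 / 2097152 := by
    linarith [h1', h2', h3, hx2P, hx4P, hP0, hq]
  linarith [mul_pos (mul_pos hx0 hc0) hG, key]
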